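/- (Sym-Tafel-type surface in the second variable.) Let u¹, u² : ℝ² → M_n(ℝ) be continuously differentiable and satisfy the zero-curvature condition ∂₂u¹ − ∂₁u² + [u¹, u²] = 0 everywhere, let Ψ : ℝ² → M_n(ℝ) be twice continuously differentiable with Ψ(ξ) invertible for every ξ and solving the linear spectral problem for (u¹, u²), and let s : ℝ → ℝ be continuously differentiable. Then the surface F^s := s(ξ₂)·Ψ⁻¹·(∂₂Ψ) has partial derivatives ∂₁F^s = s(ξ₂)·Ψ⁻¹·(∂₂u¹)·Ψ and ∂₂F^s = Ψ⁻¹·∂₂(s(ξ₂)u²)·Ψ at every point of ℝ². -/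

import Mathlib

open Matrix

attribute [local instance] Matrix.normedAddCommGroup Matrix.normedSpace

/-- Partial derivative in the first variable `ξ₁` of a matrix-valued map on `ℝ²`. -/
noncomputable def pd1 {n : ℕ} (f : ℝ × ℝ → Matrix (Fin n) (Fin n) ℝ) (p : ℝ × ℝ) :
    Matrix (Fin n) (Fin n) ℝ :=
  fderiv ℝ f p (1, 0)

/-- Partial derivative in the second variable `ξ₂` of a matrix-valued map on `ℝ²`. -/
noncomputable def pd2 {n : ℕ} (f : ℝ × ℝ → Matrix (Fin n) (Fin n) ℝ) (p : ℝ × ℝ) :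
    Matrix (Fin n) (Fin n) ℝ :=
  fderiv ℝ f p (0, 1)

namespace SymTafelAux

abbrev M (n : ℕ) := Matrix (Fin n) (Fin n) ℝ

instance instTopM {n : ℕ} : TopologicalSpace (M n) :=
  (Matrix.normedAddCommGroup : NormedAddCommGroup (M n)).toUniformSpace.toTopologicalSpace

variable {n : ℕ}

/-- entry map as a continuous linear map -/
noncomputable def entryCLM (i j : Fin n) : M n →L[ℝ] ℝ :=
  (ContinuousLinearMap.proj j).comp
    (ContinuousLinearMap.proj (R := ℝ) (φ := fun _ : Fin n => Fin n → ℝ) i)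

/-- matrix multiplication as a continuous bilinear map -/
noncomputable def mulCLM (n : ℕ) : M n →L[ℝ] M n →L[ℝ] M n :=
  LinearMap.toContinuousLinearMap
  { toFun := fun A => LinearMap.toContinuousLinearMap (LinearMap.mulLeft ℝ A)
    map_add' := by intro A B; apply ContinuousLinearMap.ext; intro C; simp [add_mul]
    map_smul' := by intro c A; apply ContinuousLinearMap.ext; intro C; simp [smul_mul_assoc] }

@[simp] lemma mulCLM_apply (A B : M n) : mulCLM n A B = A * B := rfl

lemma hasFDerivAt_matmul {f g : ℝ × ℝ → M n} {f' g' : ℝ × ℝ →L[ℝ] M n} {p : ℝ × ℝ}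
    (hf : HasFDerivAt f f' p) (hg : HasFDerivAt g g' p) :
    HasFDerivAt (fun q => f q * g q)
      (((mulCLM n) (f p)).comp g' + ((mulCLM n).flip (g p)).comp f') p := by
  have hc : HasFDerivAt (fun q => mulCLM n (f q)) ((mulCLM n).comp f') p :=
    (mulCLM n).hasFDerivAt.comp p hf
  exact hc.clm_apply hg

@[simp] lemma matmul_deriv_apply {f' g' : ℝ × ℝ →L[ℝ] M n} (A B : M n) (v : ℝ × ℝ) :
    (((mulCLM n) A).comp g' + ((mulCLM n).flip B).comp f') v = A * g' v + f' v * B := by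
  simp

lemma differentiable_entry {f : ℝ × ℝ → M n} (hf : Differentiable ℝ f) (i j : Fin n) :
    Differentiable ℝ (fun q => f q i j) :=
  (entryCLM i j).differentiable.comp hf

lemma differentiable_det {f : ℝ × ℝ → M n}
    (hf : ∀ i j, Differentiable ℝ (fun q => f q i j)) :
    Differentiable ℝ (fun q => (f q).det) := by
  simp only [Matrix.det_apply']
  apply Differentiable.fun_sum
  intro σ _
  apply Differentiable.const_mul
  intro p
  exact (HasFDerivAt.finset_prod (fun i _ => ((hf (σ i) i) p).hasFDerivAt)).differentiableAt

lemma differentiable_pi_matrix {f : ℝ × ℝ → M n}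
    (hf : ∀ i j, Differentiable ℝ (fun q => f q i j)) :
    Differentiable ℝ f := by
  intro p
  apply differentiableAt_pi.2
  intro i
  apply differentiableAt_pi.2
  intro j
  exact hf i j p

lemma differentiable_inv_matrix {f : ℝ × ℝ → M n} (hf : Differentiable ℝ f)
    (hinv : ∀ p, IsUnit (f p)) : Differentiable ℝ (fun q => (f q)⁻¹) := by
  have hdet : Differentiable ℝ (fun q => (f q).det) :=
    differentiable_det (fun i j => differentiable_entry hf i j)
  have hdetne : ∀ p, (f p).det ≠ 0 := fun p =>
    (Matrix.isUnit_iff_isUnit_det _ |>.1 (hinv p)).ne_zero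
  have hadj : Differentiable ℝ (fun q => (f q).adjugate) := by
    apply differentiable_pi_matrix
    intro i j
    have h1 : (fun q => (f q).adjugate i j)
        = fun q => ((f q).updateRow j (Pi.single i 1)).det := by
      funext q; rw [Matrix.adjugate_apply]
    rw [h1]
    apply differentiable_det
    intro k l
    by_cases hk : k = j
    · subst hk
      simp only [Matrix.updateRow_apply, if_pos rfl]
      exact differentiable_const _
    · have h2 : (fun q => ((f q).updateRow j (Pi.single i 1)) k l) = fun q => f q k l := by
        funext q; simp [Matrix.updateRow_apply, hk]
      rw [h2]
      exact differentiable_entry hf k l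
  have h3 : (fun q => (f q)⁻¹) = fun q => ((f q).det)⁻¹ • (f q).adjugate := by
    funext q; rw [Matrix.inv_def, Ring.inverse_eq_inv']
  rw [h3]
  exact (hdet.inv hdetne).smul hadj

end SymTafelAux

open SymTafelAux

/-- Sym–Tafel-type surface in the second variable: for `(u¹, u²)` satisfying
the ZCC, `Ψ` solving the LSP, and `s : ℝ → ℝ` continuously differentiable, the surface
`F^s := s(ξ₂)·Ψ⁻¹·(∂₂Ψ)` has partial derivatives `∂₁F^s = s(ξ₂)·Ψ⁻¹·(∂₂u¹)·Ψ` and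
`∂₂F^s = Ψ⁻¹·∂₂(s(ξ₂)u²)·Ψ`. -/
theorem surface_Fs_tangent_vectors {n : ℕ} (hn : 1 ≤ n)
    (u1 u2 Ψ : ℝ × ℝ → Matrix (Fin n) (Fin n) ℝ)
    (hu1 : ContDiff ℝ 1 u1) (hu2 : ContDiff ℝ 1 u2)
    (hzcc : ∀ p : ℝ × ℝ, pd2 u1 p - pd1 u2 p + (u1 p * u2 p - u2 p * u1 p) = 0)
    (hΨ : ContDiff ℝ 2 Ψ)
    (hΨinv : ∀ p : ℝ × ℝ, IsUnit (Ψ p))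
    (hlsp1 : ∀ p : ℝ × ℝ, pd1 Ψ p = u1 p * Ψ p)
    (hlsp2 : ∀ p : ℝ × ℝ, pd2 Ψ p = u2 p * Ψ p)
    (s : ℝ → ℝ) (hs : ContDiff ℝ 1 s)
    (Fs : ℝ × ℝ → Matrix (Fin n) (Fin n) ℝ)
    (hFs : Fs = fun p => s p.2 • ((Ψ p)⁻¹ * pd2 Ψ p)) :
    (∀ p : ℝ × ℝ,
      pd1 Fs p = s p.2 • ((Ψ p)⁻¹ * pd2 u1 p * Ψ p)) ∧
    (∀ p : ℝ × ℝ,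
      pd2 Fs p = (Ψ p)⁻¹ * pd2 (fun q => s q.2 • u2 q) p * Ψ p) := by
  have hΨdiff : Differentiable ℝ Ψ := hΨ.differentiable two_ne_zero
  have hu2diff : Differentiable ℝ u2 := hu2.differentiable one_ne_zero
  have hsdiff : Differentiable ℝ s := hs.differentiable one_ne_zero
  have hdet : ∀ p, IsUnit (Ψ p).det := fun p => (Matrix.isUnit_iff_isUnit_det _).1 (hΨinv p)
  have hVdiff : Differentiable ℝ (fun q => (Ψ q)⁻¹) :=
    differentiable_inv_matrix hΨdiff hΨinv
  -- derivative of the inverse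
  have hVd : ∀ (p : ℝ × ℝ) (v : ℝ × ℝ),
      fderiv ℝ (fun q => (Ψ q)⁻¹) p v = -((Ψ p)⁻¹ * fderiv ℝ Ψ p v * (Ψ p)⁻¹) := by
    intro p v
    have hone : (fun q => (Ψ q)⁻¹ * Ψ q) = fun _ => (1 : Matrix (Fin n) (Fin n) ℝ) := by
      funext q; exact Matrix.nonsing_inv_mul _ (hdet q)
    have h1 := hasFDerivAt_matmul (hVdiff p).hasFDerivAt (hΨdiff p).hasFDerivAt
    rw [hone] at h1
    have h0 := (hasFDerivAt_const (1 : Matrix (Fin n) (Fin n) ℝ) p).unique h1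
    have h2 : (0 : ℝ × ℝ →L[ℝ] Matrix (Fin n) (Fin n) ℝ) v
        = (Ψ p)⁻¹ * fderiv ℝ Ψ p v + fderiv ℝ (fun q => (Ψ q)⁻¹) p v * Ψ p := by
      rw [h0]; simp
    have h3 : (0 : Matrix (Fin n) (Fin n) ℝ)
        = (Ψ p)⁻¹ * fderiv ℝ Ψ p v + fderiv ℝ (fun q => (Ψ q)⁻¹) p v * Ψ p := by
      simpa using h2
    have h4 := congrArg (fun X => X * (Ψ p)⁻¹) h3
    simp only [add_mul, zero_mul, mul_assoc, Matrix.mul_nonsing_inv _ (hdet p), mul_one] at h4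
    rw [eq_comm, add_eq_zero_iff_eq_neg] at h4
    rw [mul_assoc, h4, neg_neg]
  -- rewrite Fs
  have hFs' : Fs = fun q => s q.2 • ((Ψ q)⁻¹ * (u2 q * Ψ q)) := by
    rw [hFs]; funext q; rw [hlsp2 q]
  -- scalar factor
  have hsc : ∀ p : ℝ × ℝ, HasFDerivAt (fun q : ℝ × ℝ => s q.2)
      (((1 : ℝ →L[ℝ] ℝ).smulRight (deriv s p.2)).comp (ContinuousLinearMap.snd ℝ ℝ ℝ)) p :=
    fun p => ((hsdiff p.2).hasDerivAt.hasFDerivAt).comp p hasFDerivAt_snd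
  -- derivative of G := Ψ⁻¹ * (u2 * Ψ)
  have hG : ∀ p : ℝ × ℝ, HasFDerivAt (fun q => (Ψ q)⁻¹ * (u2 q * Ψ q))
      (((mulCLM n) ((Ψ p)⁻¹)).comp
          (((mulCLM n) (u2 p)).comp (fderiv ℝ Ψ p)
            + ((mulCLM n).flip (Ψ p)).comp (fderiv ℝ u2 p))
        + ((mulCLM n).flip (u2 p * Ψ p)).comp (fderiv ℝ (fun q => (Ψ q)⁻¹) p)) p :=
    fun p => hasFDerivAt_matmul (hVdiff p).hasFDerivAt
      (hasFDerivAt_matmul (hu2diff p).hasFDerivAt (hΨdiff p).hasFDerivAt)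
  have hFd : ∀ p : ℝ × ℝ, HasFDerivAt Fs
      ((s p.2) • (((mulCLM n) ((Ψ p)⁻¹)).comp
          (((mulCLM n) (u2 p)).comp (fderiv ℝ Ψ p)
            + ((mulCLM n).flip (Ψ p)).comp (fderiv ℝ u2 p))
        + ((mulCLM n).flip (u2 p * Ψ p)).comp (fderiv ℝ (fun q => (Ψ q)⁻¹) p))
       + (((1 : ℝ →L[ℝ] ℝ).smulRight (deriv s p.2)).comp
            (ContinuousLinearMap.snd ℝ ℝ ℝ)).smulRight
          ((Ψ p)⁻¹ * (u2 p * Ψ p))) p := by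
    intro p
    rw [hFs']
    exact (hsc p).smul (hG p)
  -- directional rewrites for Ψ and its inverse
  have hdΨ1 : ∀ p : ℝ × ℝ, fderiv ℝ Ψ p (1, 0) = u1 p * Ψ p := hlsp1
  have hdΨ2 : ∀ p : ℝ × ℝ, fderiv ℝ Ψ p (0, 1) = u2 p * Ψ p := hlsp2
  have hV1 : ∀ p : ℝ × ℝ, fderiv ℝ (fun q => (Ψ q)⁻¹) p (1, 0) = -((Ψ p)⁻¹ * u1 p) := by
    intro p
    rw [hVd p (1, 0), hdΨ1 p, mul_assoc, mul_assoc, Matrix.mul_nonsing_inv _ (hdet p), mul_one]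
  have hV2 : ∀ p : ℝ × ℝ, fderiv ℝ (fun q => (Ψ q)⁻¹) p (0, 1) = -((Ψ p)⁻¹ * u2 p) := by
    intro p
    rw [hVd p (0, 1), hdΨ2 p, mul_assoc, mul_assoc, Matrix.mul_nonsing_inv _ (hdet p), mul_one]
  constructor
  · intro p
    have hz : pd2 u1 p = -(u1 p * u2 p - u2 p * u1 p) + pd1 u2 p :=
      sub_eq_iff_eq_add.1 (eq_neg_of_add_eq_zero_left (hzcc p))
    have := (hFd p).fderiv
    show fderiv ℝ Fs p (1, 0) = _
    rw [this]
    simp only [ContinuousLinearMap.add_apply, ContinuousLinearMap.coe_smul',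
      Pi.smul_apply, ContinuousLinearMap.comp_apply, ContinuousLinearMap.flip_apply,
      mulCLM_apply, ContinuousLinearMap.smulRight_apply, ContinuousLinearMap.coe_snd',
      ContinuousLinearMap.one_apply, hdΨ1 p, hV1 p]
    rw [hz, show pd1 u2 p = fderiv ℝ u2 p (1, 0) from rfl]
    simp only [zero_smul, smul_zero, zero_add, add_zero]
    congr 1
    noncomm_ring
  · intro p
    have hR : pd2 (fun q => s q.2 • u2 q) p
        = (deriv s p.2) • u2 p + s p.2 • fderiv ℝ u2 p (0, 1) := by
      have hRd := ((hsc p).fun_smul (hu2diff p).hasFDerivAt).fderiv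
      show fderiv ℝ (fun q => s q.2 • u2 q) p (0, 1) = _
      rw [hRd]
      simp
      abel
    have := (hFd p).fderiv
    show fderiv ℝ Fs p (0, 1) = _
    rw [this, hR]
    simp only [ContinuousLinearMap.add_apply, ContinuousLinearMap.coe_smul',
      Pi.smul_apply, ContinuousLinearMap.comp_apply, ContinuousLinearMap.flip_apply,
      mulCLM_apply, ContinuousLinearMap.smulRight_apply, ContinuousLinearMap.coe_snd',
      ContinuousLinearMap.one_apply, hdΨ2 p, hV2 p, one_smul]
    simp only [mul_add, add_mul, smul_add, mul_smul_comm, smul_mul_assoc, mul_assoc,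
      neg_mul, mul_neg, smul_neg, neg_neg]
    abel
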